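/- arXiv:1612.03355 — 6 statements merged into one kernel-verified Lean document; each statement's English description precedes it below -/
import Mathlib

section
/- For every real number β, with 𝒜 = [[0,0,0],[0,0,1],[0,-1,0]] and 𝒞 = [[-cos β, -sin β, 0], [-sin β, cos β, 0], [0, 0, -1]], the commutator 𝒪 := 𝒜𝒞 - 𝒞𝒜 equals 2cos(β/2)·[[0, 0, sin(β/2)], [0, 0, -cos(β/2)], [sin(β/2), -cos(β/2), 0]]; equivalently, for every v ∈ ℝ³, 𝒪v = 2cos(β/2)·(⟨u₁, v⟩ε₃ + ⟨ε₃, v⟩u₁), where u₁ = (sin(β/2), -cos(β/2), 0) and ε₃ = (0,0,1). -/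
open Matrix

/-- For every real `β`, with `𝒜 = [[0,0,0],[0,0,1],[0,-1,0]]` and
`𝒞 = [[-cos β, -sin β, 0], [-sin β, cos β, 0], [0,0,-1]]`, the commutator
`𝒪 = 𝒜𝒞 - 𝒞𝒜` equals
`2cos(β/2)·[[0,0,sin(β/2)],[0,0,-cos(β/2)],[sin(β/2),-cos(β/2),0]]`; equivalently, for
every `v ∈ ℝ³`, `𝒪v = 2cos(β/2)·(⟨u₁,v⟩ε₃ + ⟨ε₃,v⟩u₁)` where
`u₁ = (sin(β/2), -cos(β/2), 0)` and `ε₃ = (0,0,1)`. -/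
theorem noslip_commutator_formula
    (β : ℝ) (A C O : Matrix (Fin 3) (Fin 3) ℝ)
    (hA : A = !![0, 0, 0; 0, 0, 1; 0, -1, 0])
    (hC : C = !![-Real.cos β, -Real.sin β, 0;
                 -Real.sin β,  Real.cos β, 0;
                  0,           0,         -1])
    (hO : O = A * C - C * A)
    (u₁ ε₃ : Fin 3 → ℝ)
    (hu₁ : u₁ = ![Real.sin (β/2), -Real.cos (β/2), 0])
    (hε₃ : ε₃ = ![0, 0, 1]) :
    O = (2 * Real.cos (β/2)) •
        !![0, 0, Real.sin (β/2);
           0, 0, -Real.cos (β/2);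
           Real.sin (β/2), -Real.cos (β/2), 0] ∧
    ∀ v : Fin 3 → ℝ,
      O.mulVec v = (2 * Real.cos (β/2)) • ((u₁ ⬝ᵥ v) • ε₃ + (ε₃ ⬝ᵥ v) • u₁) := by
  have hs : Real.sin β = 2 * Real.sin (β/2) * Real.cos (β/2) := by
    have := Real.sin_two_mul (β/2)
    rw [show 2 * (β/2) = β by ring] at this
    linarith
  have hc : Real.cos β = 2 * Real.cos (β/2) ^ 2 - 1 := by
    have := Real.cos_two_mul (β/2)
    rw [show 2 * (β/2) = β by ring] at this
    linarith
  have hmat : O = (2 * Real.cos (β/2)) •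
        !![0, 0, Real.sin (β/2);
           0, 0, -Real.cos (β/2);
           Real.sin (β/2), -Real.cos (β/2), 0] := by
    subst hA hC hO
    ext i j
    fin_cases i <;> fin_cases j <;>
      simp [Matrix.mul_apply, Fin.sum_univ_succ, Matrix.vecHead, Matrix.vecTail, hs, hc] <;> ring
  refine ⟨hmat, fun v => ?_⟩
  subst hu₁ hε₃
  rw [hmat]
  ext i
  fin_cases i <;>
    simp [Matrix.mulVec, dotProduct, Fin.sum_univ_succ] <;> ring
end

section
/- Let β, φ ∈ (0, π/2), ψ ∈ (-π/2, π/2), and ϕ ∈ ℝ. Set s = sin(β/2), c = cos(β/2), ρ = √(1 - c²cos²φ), y₁ = (0, -sin φ, s·cos φ)/ρ, ε̂₁ = (1, 0, 0), ε̂₂ = (0, s·cos φ, sin φ)/ρ, and y = cos ψ · y₁ + sin ψ cos ϕ · ε̂₁ + sin ψ sin ϕ · ε̂₂ ∈ ℝ³. Then the third coordinate of y is y·ε₃ = (cos ψ · cos φ · sin(β/2)/√(1 - cos²(β/2)cos²φ)) · (1 + tan ψ · (tan φ / sin(β/2)) · sin ϕ). -/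
open Matrix Real

/-- For `β, φ ∈ (0, π/2)`, `ψ ∈ (-π/2, π/2)`, `ϕ ∈ ℝ`, with
`s = sin(β/2)`, `c = cos(β/2)`, `ρ = √(1 - c²cos²φ)`, `y₁ = (0, -sin φ, s·cos φ)/ρ`,
`ε̂₁ = (1,0,0)`, `ε̂₂ = (0, s·cos φ, sin φ)/ρ`, and
`y = cos ψ·y₁ + sin ψ cos ϕ·ε̂₁ + sin ψ sin ϕ·ε̂₂`, the third coordinate of `y` is
`y·ε₃ = (cos ψ·cos φ·sin(β/2)/√(1 - cos²(β/2)cos²φ))·(1 + tan ψ·(tan φ/sin(β/2))·sin ϕ)`. -/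
theorem wedge_invariant_density
    (β φ ψ ϕ : ℝ) (hβ : β ∈ Set.Ioo 0 (π/2)) (hφ : φ ∈ Set.Ioo 0 (π/2))
    (hψ : ψ ∈ Set.Ioo (-(π/2)) (π/2))
    (s c ρ : ℝ)
    (hs : s = Real.sin (β/2)) (hc : c = Real.cos (β/2))
    (hρ : ρ = Real.sqrt (1 - c^2 * Real.cos φ ^ 2))
    (y₁ e₁ e₂ y : Fin 3 → ℝ)
    (hy₁ : y₁ = ρ⁻¹ • ![0, -Real.sin φ, s * Real.cos φ])
    (he₁ : e₁ = ![1, 0, 0])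
    (he₂ : e₂ = ρ⁻¹ • ![0, s * Real.cos φ, Real.sin φ])
    (hy : y = Real.cos ψ • y₁ + (Real.sin ψ * Real.cos ϕ) • e₁
            + (Real.sin ψ * Real.sin ϕ) • e₂) :
    y 2 = (Real.cos ψ * Real.cos φ * Real.sin (β/2)
            / Real.sqrt (1 - Real.cos (β/2) ^ 2 * Real.cos φ ^ 2))
          * (1 + Real.tan ψ * (Real.tan φ / Real.sin (β/2)) * Real.sin ϕ) := by
  have hβ1 : 0 < β/2 := by have := hβ.1; linarith
  have hβ2 : β/2 < π/2 := by have := hβ.2; linarith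
  have hs0 : 0 < s := hs ▸ Real.sin_pos_of_pos_of_lt_pi hβ1 (by linarith [Real.pi_pos])
  have hcφ : 0 < Real.cos φ := Real.cos_pos_of_mem_Ioo ⟨by linarith [hφ.1, Real.pi_pos], hφ.2⟩
  have hcφ1 : Real.cos φ ≤ 1 := Real.cos_le_one φ
  have hsc : s^2 + c^2 = 1 := by rw [hs, hc]; exact Real.sin_sq_add_cos_sq _
  have hpos : 0 < 1 - c^2 * Real.cos φ ^ 2 := by 
    have h1 : (0:ℝ) ≤ 1 - Real.cos φ ^ 2 := by nlinarith
    nlinarith [pow_pos hs0 2, mul_nonneg (sq_nonneg c) h1]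
  have hρ0 : 0 < ρ := hρ ▸ Real.sqrt_pos.mpr hpos
  have hcψ : 0 < Real.cos ψ := Real.cos_pos_of_mem_Ioo ⟨hψ.1, hψ.2⟩
  have hy2 : y 2 = Real.cos ψ * (ρ⁻¹ * (s * Real.cos φ))
      + Real.sin ψ * Real.sin ϕ * (ρ⁻¹ * Real.sin φ) := by
    subst hy hy₁ he₁ he₂; simp [Pi.add_apply, Pi.smul_apply, smul_eq_mul]
  rw [hy2, Real.tan_eq_sin_div_cos, Real.tan_eq_sin_div_cos, ← hs, ← hc, ← hρ]
  field_simp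
end

section
/- Let c, c_φ, c_ψ, t, κ, κ̃, d̄ ∈ ℝ with c_φ ≠ 0 and t·c_ψ = d̄·c_φ, let ρ ∈ ℝ satisfy ρ² = 1 - c²c_φ², set x = 1 - 2c²c_φ², and define the 2×2 real matrices C = [[x, -2c·c_φ·ρ], [-2c·c_φ·ρ, -x]], R = [[1, 0], [0, -1]], and Θ = 2c·(c_ψ/c_φ)·[[0, ρ], [0, -c·c_φ]]. Then trace( I + (C·R)² - t(κ + κ̃)·(Θ + (C·R)·(Θ·R)) + t²·κ·κ̃·(Θ·R)² ) = 4·( x² - (κ + κ̃)·c²·c_φ·x·d̄ + κ·κ̃·c⁴·c_φ²·d̄² ). -/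
open Matrix

/-- With `c_φ ≠ 0`, `t·c_ψ = d̄·c_φ`, `ρ² = 1 - c²c_φ²`,
`x = 1 - 2c²c_φ²`, and the wavefront-basis matrices `C`, `R`, `Θ` below, the trace of
`I + (CR)² - t(κ + κ̃)(Θ + (CR)(ΘR)) + t²κκ̃(ΘR)²` equals
`4(x² - (κ + κ̃)c²c_φ·x·d̄ + κκ̃c⁴c_φ²·d̄²)`. -/
theorem period_two_trace_general_curvatures
    (c cφ cψ t κ κ' d ρ x : ℝ) (hcφ : cφ ≠ 0) (ht : t * cψ = d * cφ)
    (hρ : ρ^2 = 1 - c^2 * cφ^2) (hx : x = 1 - 2*c^2*cφ^2)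
    (C R Θ : Matrix (Fin 2) (Fin 2) ℝ)
    (hC : C = !![x, -(2*c*cφ*ρ); -(2*c*cφ*ρ), -x])
    (hR : R = !![1, 0; 0, -1])
    (hΘ : Θ = (2*c*(cψ/cφ)) • !![0, ρ; 0, -(c*cφ)]) :
    (1 + (C * R)^2 - (t*(κ + κ')) • (Θ + (C * R) * (Θ * R))
      + (t^2*κ*κ') • (Θ * R)^2).trace
    = 4 * (x^2 - (κ + κ') * c^2 * cφ * x * d + κ * κ' * c^4 * cφ^2 * d^2) := by
  subst hC hR hΘ hx
  simp [pow_two, Matrix.trace_fin_two, Matrix.mul_apply, Fin.sum_univ_succ,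
    Matrix.smul_apply, Matrix.one_apply]
  field_simp
  linear_combination (-8*c^2*cφ^2 - 4*c^2*cψ*t*κ - 4*c^2*cψ*t*κ') * hρ +
    (8*c^4*cφ^2*κ + 8*c^4*cφ^2*κ' + 4*c^4*cψ*t*κ*κ' - 4*c^2*κ - 4*c^2*κ' + 4*c^4*cφ*κ*κ'*d) * ht
end

section
/- Let c, c_φ, c_ψ, t, κ, d̄ ∈ ℝ with c_φ ≠ 0 and t·c_ψ = d̄·c_φ, let ρ ∈ ℝ satisfy ρ² = 1 - c²c_φ², set x = 1 - 2c²c_φ², and define the 2×2 real matrices C = [[x, -2c·c_φ·ρ], [-2c·c_φ·ρ, -x]], R = [[1, 0], [0, -1]], and Θ = 2c·(c_ψ/c_φ)·[[0, ρ], [0, -c·c_φ]]. Then in the equal-curvature case κ̃ = κ, trace( I + (C·R)² - 2tκ·(Θ + (C·R)·(Θ·R)) + t²·κ²·(Θ·R)² ) = ( 2x - 2κ·c²·c_φ·d̄ )² = ( trace(C·R + tκΘ) )²; i.e., the trace of dT²_ξ is the square of the trace of R·dT_ξ. -/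
open Matrix

/-- In the equal-curvature case `κ̃ = κ`, with `c_φ ≠ 0`,
`t·c_ψ = d̄·c_φ`, `ρ² = 1 - c²c_φ²`, `x = 1 - 2c²c_φ²`, and the wavefront-basis
matrices `C`, `R`, `Θ` below,
`trace(I + (CR)² - 2tκ(Θ + (CR)(ΘR)) + t²κ²(ΘR)²) = (2x - 2κc²c_φ·d̄)²
 = (trace(CR + tκΘ))²`: the trace of `dT²` is the square of the trace of `R·dT`. -/
theorem period_two_trace_equal_curvature_square
    (c cφ cψ t κ d ρ x : ℝ) (hcφ : cφ ≠ 0) (ht : t * cψ = d * cφ)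
    (hρ : ρ^2 = 1 - c^2 * cφ^2) (hx : x = 1 - 2*c^2*cφ^2)
    (C R Θ : Matrix (Fin 2) (Fin 2) ℝ)
    (hC : C = !![x, -(2*c*cφ*ρ); -(2*c*cφ*ρ), -x])
    (hR : R = !![1, 0; 0, -1])
    (hΘ : Θ = (2*c*(cψ/cφ)) • !![0, ρ; 0, -(c*cφ)]) :
    (1 + (C * R)^2 - (2*t*κ) • (Θ + (C * R) * (Θ * R))
      + (t^2*κ^2) • (Θ * R)^2).trace
      = (2*x - 2*κ*c^2*cφ*d)^2 ∧
    (2*x - 2*κ*c^2*cφ*d)^2 = ((C * R + (t*κ) • Θ).trace)^2 := by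
  subst hC hR hΘ hx
  have hd : d = t * cψ / cφ := by field_simp [ht]; linarith
  subst hd
  refine ⟨?_, ?_⟩ <;>
      simp [Matrix.trace, Matrix.one_apply, Fin.sum_univ_two, pow_two, Matrix.mul_apply,
        Matrix.smul_apply, Matrix.diag] <;>
      field_simp
  · linear_combination (-8*c^2*cφ^2 - 8*c^2*t*κ*cψ) * hρ
  · ring
end

section
/- Let c, c_φ ∈ (0, 1) with c²c_φ² ≠ 1/2, let κ, κ̃ ∈ ℝ, and set x = 1 - 2c²c_φ². Then there exists ε > 0 such that for every d̄ ∈ (0, ε), the quantity Tr(d̄) := 4·( x² - (κ + κ̃)·c²·c_φ·x·d̄ + κ·κ̃·c⁴·c_φ²·d̄² ) satisfies 0 < Tr(d̄) < 4, i.e., |Tr(d̄) - 2| < 2. Hence period-2 orbits of a no-slip billiard with collision points sufficiently close to a corner of inner angle less than π are linearly elliptic. -/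
/-- Let `c, c_φ ∈ (0,1)` with `c²c_φ² ≠ 1/2`, `κ, κ̃ ∈ ℝ`, and
`x = 1 - 2c²c_φ²`.  Then there is `ε > 0` such that for all `d̄ ∈ (0, ε)` the trace
`Tr(d̄) = 4(x² - (κ + κ̃)c²c_φ·x·d̄ + κκ̃c⁴c_φ²·d̄²)` satisfies `0 < Tr(d̄) < 4`,
i.e. `|Tr(d̄) - 2| < 2`: period-2 orbits with collision points sufficiently close to a
corner of inner angle less than `π` are linearly elliptic. -/
theorem period_two_orbits_near_corner_elliptic
    (c cφ : ℝ) (hc : c ∈ Set.Ioo (0:ℝ) 1) (hcφ : cφ ∈ Set.Ioo (0:ℝ) 1)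
    (hhalf : c^2 * cφ^2 ≠ 1/2) (κ κ' : ℝ) (x : ℝ) (hx : x = 1 - 2*c^2*cφ^2)
    (Tr : ℝ → ℝ)
    (hTr : ∀ d : ℝ, Tr d =
      4 * (x^2 - (κ + κ') * c^2 * cφ * x * d + κ * κ' * c^4 * cφ^2 * d^2)) :
    ∃ ε > (0:ℝ), ∀ d ∈ Set.Ioo 0 ε,
      (0 < Tr d ∧ Tr d < 4) ∧ |Tr d - 2| < 2 := by
  obtain ⟨hc0, hc1⟩ := hc
  obtain ⟨hcφ0, hcφ1⟩ := hcφ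
  -- 0 < c²cφ² < 1
  have hp0 : 0 < c^2 * cφ^2 := by positivity
  have hc2 : c^2 < 1 := by nlinarith
  have hcφ2 : cφ^2 < 1 := by nlinarith
  have hp1 : c^2 * cφ^2 < 1 := by nlinarith
  -- x ∈ (-1,1), x ≠ 0
  have hx1 : -1 < x := by rw [hx]; nlinarith
  have hx2 : x < 1 := by rw [hx]; nlinarith
  have hxne : x ≠ 0 := by
    rw [hx]; intro h
    apply hhalf; nlinarith
  have hx2pos : 0 < x^2 := by positivity
  have hx2lt : x^2 < 1 := by nlinarith
  -- continuity of the polynomial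
  set g : ℝ → ℝ := fun d =>
    4 * (x^2 - (κ + κ') * c^2 * cφ * x * d + κ * κ' * c^4 * cφ^2 * d^2) with hg
  have hgc : Continuous g := by fun_prop
  have hgz : g 0 = 4 * x^2 := by simp [hg]
  have hg0 : g 0 ∈ Set.Ioo (0:ℝ) 4 := by
    rw [hgz]; constructor <;> nlinarith
  have hopen : IsOpen (g ⁻¹' Set.Ioo (0:ℝ) 4) := isOpen_Ioo.preimage hgc
  have hmem : (0:ℝ) ∈ g ⁻¹' Set.Ioo (0:ℝ) 4 := hg0
  obtain ⟨ε, hε, hball⟩ := Metric.isOpen_iff.mp hopen 0 hmem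
  refine ⟨ε, hε, fun d hd => ?_⟩
  have hdist : d ∈ Metric.ball (0:ℝ) ε := by
    simp [Real.dist_eq, abs_of_pos hd.1]
    exact hd.2
  have := hball hdist
  have hTrd : Tr d = g d := hTr d
  rw [hTrd]
  refine ⟨⟨this.1, this.2⟩, ?_⟩
  rw [abs_lt]; constructor <;> linarith [this.1, this.2]
end

section
/- For every real R > 0 there exists φ ∈ (0, π/2) such that, setting x = 1 - (4/3)·cos²φ and ζ = (1 - 2R·cos φ)/R, one has 0 < (2x - (4/3)·ζ·cos φ)² < 4. Moreover, 2x - (4/3)·ζ·cos φ = 2·(1 - 2cos φ/(3R)), so the condition 0 < (2x - (4/3)ζ cos φ)² < 4 holds if and only if cos φ < 3R and cos φ ≠ 3R/2; in particular the critical radius for the period-2 family is R₀ = cos φ/3. Hence the no-slip Sinai billiard with a circular scatterer of any radius R > 0 has linearly elliptic period-2 trajectories. -/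
open Real

/-- The trace of `dT²` on the nontrivial invariant `2`-plane for the period-2 family of
the no-slip Sinai billiard with scatterer radius `R`, at parameter `φ`, where for the
uniform mass distribution `cos²(β/2) = 2/3`, `x = 1 - (4/3)cos²φ` and
`ζ = (1 - 2R·cos φ)/R`. -/
noncomputable def sinaiTraceFactor (R φ : ℝ) : ℝ :=
  2 * (1 - (4/3) * Real.cos φ ^ 2)
    - (4/3) * ((1 - 2 * R * Real.cos φ) / R) * Real.cos φ

lemma sinaiTraceFactor_eq (R : ℝ) (hR : 0 < R) (φ : ℝ) :
    sinaiTraceFactor R φ = 2 * (1 - 2 * Real.cos φ / (3 * R)) := by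
  unfold sinaiTraceFactor
  field_simp
  ring

lemma sinai_cond (R : ℝ) (hR : 0 < R) (φ : ℝ) (hc : 0 < Real.cos φ) :
    (0 < (sinaiTraceFactor R φ)^2 ∧ (sinaiTraceFactor R φ)^2 < 4) ↔
      (Real.cos φ < 3 * R ∧ Real.cos φ ≠ 3 * R / 2) := by
  rw [sinaiTraceFactor_eq R hR]
  set c := Real.cos φ
  constructor
  · rintro ⟨h0, h4⟩
    constructor
    · by_contra hge
      push_neg at hge
      have hu : 2 ≤ 2 * c / (3 * R) := by
        rw [le_div_iff₀ (by linarith)]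
        linarith
      nlinarith
    · intro hce
      rw [hce] at h0
      have : 2 * (1 - 2 * (3 * R / 2) / (3 * R)) = 0 := by
        field_simp
        norm_num
      rw [this] at h0
      simp at h0
  · rintro ⟨h1, h2⟩
    have hne : 2 * (1 - 2 * c / (3 * R)) ≠ 0 := by
      intro h
      apply h2
      field_simp at h
      linarith
    constructor
    · positivity
    · have hlt : 2 * c / (3 * R) < 2 := by
        rw [div_lt_iff₀ (by linarith)]
        linarith
      have hgt : 0 < 2 * c / (3 * R) := by positivity
      nlinarith

/-- For every `R > 0` there is `φ ∈ (0, π/2)` with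
`0 < (2x - (4/3)ζcos φ)² < 4` where `x = 1 - (4/3)cos²φ` and `ζ = (1 - 2Rcos φ)/R`.
Moreover `2x - (4/3)ζcos φ = 2(1 - 2cos φ/(3R))`, and the condition
`0 < (2x - (4/3)ζcos φ)² < 4` holds iff `cos φ < 3R` and `cos φ ≠ 3R/2`; in particular
the critical radius for the period-2 family is `R₀ = cos φ/3`.  Hence the no-slip Sinai
billiard with circular scatterer of any radius `R > 0` has linearly elliptic period-2
trajectories. -/
theorem noslip_sinai_billiard_elliptic_period_two (R : ℝ) (hR : 0 < R) :
    (∃ φ ∈ Set.Ioo 0 (π/2),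
      0 < (sinaiTraceFactor R φ)^2 ∧ (sinaiTraceFactor R φ)^2 < 4) ∧
    (∀ φ ∈ Set.Ioo 0 (π/2),
      sinaiTraceFactor R φ = 2 * (1 - 2 * Real.cos φ / (3 * R)) ∧
      ((0 < (sinaiTraceFactor R φ)^2 ∧ (sinaiTraceFactor R φ)^2 < 4) ↔
        (Real.cos φ < 3 * R ∧ Real.cos φ ≠ 3 * R / 2))) := by
  constructor
  · set c : ℝ := min (3 * R / 2) 1 / 2 with hc
    have hc0 : 0 < c := by
      have : 0 < min (3 * R / 2) 1 := lt_min (by linarith) one_pos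
      positivity
    have hcle : c ≤ 1 / 2 := by
      have : min (3 * R / 2) 1 ≤ 1 := min_le_right _ _
      simp [hc]; linarith
    have hcR : c < 3 * R / 2 := by
      have h1 : min (3 * R / 2) 1 ≤ 3 * R / 2 := min_le_left _ _
      have : 0 < min (3 * R / 2) 1 := lt_min (by linarith) one_pos
      simp [hc]; linarith
    refine ⟨Real.arccos c, ⟨Real.arccos_pos.2 (by linarith), Real.arccos_lt_pi_div_two.2 hc0⟩, ?_⟩
    have hcos : Real.cos (Real.arccos c) = c :=
      Real.cos_arccos (by linarith) (by linarith)
    rw [sinai_cond R hR _ (by rw [hcos]; exact hc0), hcos]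
    exact ⟨by linarith, by intro h; rw [h] at hcR; linarith⟩
  · intro φ hφ
    have hc : 0 < Real.cos φ := Real.cos_pos_of_mem_Ioo ⟨by linarith [hφ.1, Real.pi_pos], hφ.2⟩
    exact ⟨sinaiTraceFactor_eq R hR φ, sinai_cond R hR φ hc⟩
end
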